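/- arXiv:hep-ph/9909487 — 2 statements merged into one kernel-verified Lean document; each statement's English description precedes it below -/
import Mathlib

section
/- The flip graph Fₙ on trivalent trees with n labeled leaves is connected for all n ≥ 4: any trivalent tree with n labeled leaves can be transformed into any other by a finite sequence of elementary flips. -/
/-- A trivalent (binary) tree with `n` labeled leaves, encoded by its set of
splits: each internal edge determines a bipartition of the leaf set, and we
record the side not containing leaf `0`.  A maximal pairwise-compatible family
of `n - 3` nontrivial splits corresponds exactly to a trivalent leaf-labeled
tree. -/
structure TrivTree (n : ℕ) where
  splits : Finset (Finset (Fin n))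
  zero_not_mem : ∀ A ∈ splits, ∀ a ∈ A, (a : ℕ) ≠ 0
  two_le_card : ∀ A ∈ splits, 2 ≤ A.card
  card_le : ∀ A ∈ splits, A.card ≤ n - 2
  compat : ∀ A ∈ splits, ∀ B ∈ splits, A ⊆ B ∨ B ⊆ A ∨ Disjoint A B
  card_splits : splits.card = n - 3

/-- The flip graph `Fₙ`: two trivalent trees are adjacent iff they are related
by an elementary flip (NNI move), i.e. iff they are distinct and share all
but one split (the flipped internal edge). -/
def flipGraph (n : ℕ) : SimpleGraph (TrivTree n) where
  Adj t t' := t ≠ t' ∧ (t.splits ∩ t'.splits).card = n - 4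
  symm := ⟨fun t t' h => ⟨Ne.symm h.1, by rw [Finset.inter_comm]; exact h.2⟩⟩
  loopless := ⟨fun t h => h.1 rfl⟩

/-- `t` and `t'` differ by a single elementary flip. -/
def Flip {n : ℕ} (t t' : TrivTree n) : Prop := (flipGraph n).Adj t t'

namespace FlipAux

open Finset

variable {n : ℕ}

/-- The "prefix" split `{1, …, j}` inside `Fin n`. -/
def pre (n j : ℕ) : Finset (Fin n) :=
  Finset.univ.filter (fun a => 0 < (a : ℕ) ∧ (a : ℕ) ≤ j)

lemma mem_pre {j : ℕ} {a : Fin n} : a ∈ pre n j ↔ 0 < (a : ℕ) ∧ (a : ℕ) ≤ j := by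
  simp [pre]

lemma pre_mono {j j' : ℕ} (h : j ≤ j') : pre n j ⊆ pre n j' := by
  intro a ha
  rw [mem_pre] at *
  exact ⟨ha.1, ha.2.trans h⟩

lemma card_pre {j : ℕ} (hj : j ≤ n - 1) : (pre n j).card = j := by
  have himg : (pre n j).image (fun a : Fin n => (a : ℕ)) = Finset.Ioc 0 j := by
    ext v
    simp only [mem_image, mem_pre, Finset.mem_Ioc]
    constructor
    · rintro ⟨a, ⟨h1, h2⟩, rfl⟩; exact ⟨h1, h2⟩
    · rintro ⟨h1, h2⟩
      have hv : v < n := by omega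
      exact ⟨⟨v, hv⟩, ⟨h1, h2⟩, rfl⟩
  have hinj := Finset.card_image_of_injective (pre n j) (Fin.val_injective)
  rw [himg] at hinj
  simpa [Nat.card_Ioc] using hinj.symm

lemma subset_pre_top (t : TrivTree n) {C : Finset (Fin n)} (hC : C ∈ t.splits) :
    C ⊆ pre n (n - 1) := by
  intro a ha
  rw [mem_pre]
  have h1 := t.zero_not_mem C hC a ha
  have h2 := a.isLt
  omega

/-- Exchanging one split for a fresh compatible one is a flip. -/
lemma flip_exchange (hn : 4 ≤ n) (t : TrivTree n) (A B : Finset (Fin n))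
    (hA : A ∈ t.splits) (hB : B ∉ t.splits)
    (h0 : ∀ a ∈ B, (a : ℕ) ≠ 0) (h2 : 2 ≤ B.card) (hle : B.card ≤ n - 2)
    (hcompat : ∀ C ∈ t.splits, C ≠ A → C ⊆ B ∨ B ⊆ C ∨ Disjoint C B) :
    ∃ t' : TrivTree n, (flipGraph n).Adj t t' ∧ t'.splits = insert B (t.splits.erase A) := by
  have hBe : B ∉ t.splits.erase A := fun h => hB (mem_of_mem_erase h)
  refine ⟨⟨insert B (t.splits.erase A), ?_, ?_, ?_, ?_, ?_⟩, ⟨?_, ?_⟩, rfl⟩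
  · intro C hC a ha
    rcases mem_insert.mp hC with rfl | hC
    · exact h0 a ha
    · exact t.zero_not_mem C (mem_of_mem_erase hC) a ha
  · intro C hC
    rcases mem_insert.mp hC with rfl | hC
    · exact h2
    · exact t.two_le_card C (mem_of_mem_erase hC)
  · intro C hC
    rcases mem_insert.mp hC with rfl | hC
    · exact hle
    · exact t.card_le C (mem_of_mem_erase hC)
  · have key : ∀ C ∈ t.splits.erase A, C ⊆ B ∨ B ⊆ C ∨ Disjoint C B := fun C hC =>
      hcompat C (mem_of_mem_erase hC) (ne_of_mem_erase hC)
    intro C hC D hD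
    rcases mem_insert.mp hC with hCB | hC
    · rcases mem_insert.mp hD with hDB | hD
      · rw [hCB, hDB]
        exact Or.inl (Finset.Subset.refl _)
      · rw [hCB]
        rcases key D hD with h | h | h
        · exact Or.inr (Or.inl h)
        · exact Or.inl h
        · exact Or.inr (Or.inr h.symm)
    · rcases mem_insert.mp hD with hDB | hD
      · rw [hDB]
        exact key C hC
      · exact t.compat C (mem_of_mem_erase hC) D (mem_of_mem_erase hD)
  · rw [card_insert_of_notMem hBe, card_erase_of_mem hA, t.card_splits]
    omega
  · intro h
    apply hB
    have hsp : t.splits = insert B (t.splits.erase A) := congrArg TrivTree.splits h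
    rw [hsp]
    exact mem_insert_self B _
  · have hint : t.splits ∩ insert B (t.splits.erase A) = t.splits.erase A := by
      ext C
      simp only [mem_inter, mem_insert, mem_erase]
      constructor
      · rintro ⟨hCs, rfl | hC⟩
        · exact absurd hCs hB
        · exact hC
      · intro hC
        exact ⟨hC.2, Or.inr hC⟩
    rw [hint, card_erase_of_mem hA, t.card_splits]
    omega

/-- The invariant: all prefix splits `{1,…,j}` for `k ≤ j ≤ n-2` are present. -/
def Inv (n k : ℕ) (t : TrivTree n) : Prop :=
  ∀ j, k ≤ j → j ≤ n - 2 → pre n j ∈ t.splits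

lemma x_mem_pre {k : ℕ} (hxlt : k + 1 < n) : (⟨k+1, hxlt⟩ : Fin n) ∈ pre n (k+1) := by
  rw [mem_pre]
  simp

lemma pre_erase {k : ℕ} (hxlt : k + 1 < n) :
    (pre n (k+1)).erase ⟨k+1, hxlt⟩ = pre n k := by
  have hxval : ((⟨k+1, hxlt⟩ : Fin n) : ℕ) = k + 1 := rfl
  ext a
  simp only [mem_erase, mem_pre]
  constructor
  · rintro ⟨hax, h1, h2⟩
    refine ⟨h1, ?_⟩
    have hne : (a : ℕ) ≠ k + 1 := by
      intro h
      exact hax (Fin.ext (by rw [h, hxval]))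
    omega
  · rintro ⟨h1, h2⟩
    have hax : a ≠ ⟨k+1, hxlt⟩ := by
      intro h
      rw [h] at h2
      rw [hxval] at h2
      omega
    exact ⟨hax, h1, by omega⟩

lemma hR_lemma (hn : 4 ≤ n) {k : ℕ} (hk2 : 2 ≤ k) (hk : k ≤ n - 2) (t : TrivTree n)
    (hinv : Inv n (k+1) t) :
    ∀ C ∈ t.splits, C ⊆ pre n (k+1) ∨ pre n (k+1) ⊆ C ∨ Disjoint C (pre n (k+1)) := by
  intro C hC
  by_cases hkn : k = n - 2
  · left
    have hpp : pre n (k+1) = pre n (n-1) := by rw [hkn]; congr 1; omega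
    rw [hpp]
    exact subset_pre_top t hC
  · have hmem : pre n (k+1) ∈ t.splits := hinv (k+1) le_rfl (by omega)
    exact t.compat C hC _ hmem

/-- When no split strictly inside `pre n (k+1)` contains the leaf `k+1`, we can
directly create the split `pre n k` by one flip (removing some non-prefix split). -/
lemma step_direct (hn : 4 ≤ n) {k : ℕ} (hk2 : 2 ≤ k) (hk : k ≤ n - 2) (t : TrivTree n)
    (hxlt : k + 1 < n)
    (hD : t.splits.filter (fun A => A ⊂ pre n (k+1) ∧ (⟨k+1, hxlt⟩ : Fin n) ∈ A) = ∅)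
    (hgoal : pre n k ∉ t.splits)
    (hinv : Inv n (k+1) t) :
    ∃ t' : TrivTree n, Inv n k t' ∧ (flipGraph n).Adj t t' := by
  set x : Fin n := ⟨k+1, hxlt⟩ with hxdef
  have hR := hR_lemma hn hk2 hk t hinv
  set Pref := (Finset.Icc (k+1) (n-2)).image (pre n) with hPref
  have hPrefcard : Pref.card ≤ n - 2 - k := by
    calc Pref.card ≤ (Finset.Icc (k+1) (n-2)).card := Finset.card_image_le
    _ = n - 2 - k := by rw [Nat.card_Icc]; omega
  have hnsub : ¬ t.splits ⊆ Pref := by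
    intro hsub
    have hcc := Finset.card_le_card hsub
    rw [t.card_splits] at hcc
    omega
  obtain ⟨C₀, hC₀s, hC₀p⟩ := Finset.not_subset.mp hnsub
  have hcompat : ∀ C ∈ t.splits, C ≠ C₀ →
      C ⊆ pre n k ∨ pre n k ⊆ C ∨ Disjoint C (pre n k) := by
    intro C hC _
    rcases hR C hC with h | h | h
    · by_cases hxC : x ∈ C
      · have hCR : C = pre n (k+1) := by
          by_contra hne
          have hmemD : C ∈ t.splits.filter (fun A => A ⊂ pre n (k+1) ∧ x ∈ A) :=
            mem_filter.mpr ⟨hC, lt_of_le_of_ne h hne, hxC⟩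
          rw [hD] at hmemD
          exact absurd hmemD (Finset.notMem_empty _)
        right; left
        rw [hCR]
        exact pre_mono (Nat.le_succ k)
      · left
        intro a ha
        rw [← pre_erase hxlt]
        exact mem_erase.mpr ⟨fun hax => hxC (by subst hax; exact ha), h ha⟩
    · right; left
      exact (pre_mono (Nat.le_succ k)).trans h
    · right; right
      exact h.mono_right (pre_mono (Nat.le_succ k))
  obtain ⟨t', hadj, hsp⟩ := flip_exchange hn t C₀ (pre n k) hC₀s hgoal
    (fun a ha => by rw [mem_pre] at ha; omega)
    (by rw [card_pre (by omega : k ≤ n - 1)]; exact hk2)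
    (by rw [card_pre (by omega : k ≤ n - 1)]; exact hk)
    hcompat
  refine ⟨t', ?_, hadj⟩
  intro j hjk hj2
  rw [hsp]
  rcases eq_or_lt_of_le hjk with rfl | hjlt
  · exact mem_insert_self _ _
  · apply mem_insert_of_mem
    refine mem_erase.mpr ⟨?_, hinv j hjlt hj2⟩
    intro heq
    apply hC₀p
    rw [← heq]
    exact mem_image.mpr ⟨j, mem_Icc.mpr ⟨hjlt, hj2⟩, rfl⟩

/-- The raising move: if some split strictly inside `pre n (k+1)` contains the
leaf `k+1`, one flip strictly decreases the number of such splits, preserving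
the invariant. -/
lemma step_raise (hn : 4 ≤ n) {k : ℕ} (hk2 : 2 ≤ k) (hk : k ≤ n - 2) (t : TrivTree n)
    (hxlt : k + 1 < n)
    (hD : (t.splits.filter (fun A => A ⊂ pre n (k+1) ∧ (⟨k+1, hxlt⟩ : Fin n) ∈ A)).Nonempty)
    (hinv : Inv n (k+1) t) :
    ∃ t' : TrivTree n, Inv n (k+1) t' ∧ (flipGraph n).Adj t t' ∧
      (t'.splits.filter (fun A => A ⊂ pre n (k+1) ∧ (⟨k+1, hxlt⟩ : Fin n) ∈ A)).card <
      (t.splits.filter (fun A => A ⊂ pre n (k+1) ∧ (⟨k+1, hxlt⟩ : Fin n) ∈ A)).card := by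
  set x : Fin n := ⟨k+1, hxlt⟩ with hxdef
  set D := t.splits.filter (fun A => A ⊂ pre n (k+1) ∧ x ∈ A) with hDdef
  have hR := hR_lemma hn hk2 hk t hinv
  have hDfacts : ∀ C ∈ D, C ∈ t.splits ∧ C ⊂ pre n (k+1) ∧ x ∈ C := by
    intro C hC
    have hmf := mem_filter.mp hC
    exact ⟨hmf.1, hmf.2⟩
  have hchain : ∀ C ∈ D, ∀ C' ∈ D, C ⊆ C' ∨ C' ⊆ C := by
    intro C hC C' hC'
    obtain ⟨hCs, _, hxC⟩ := hDfacts C hC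
    obtain ⟨hC's, _, hxC'⟩ := hDfacts C' hC'
    rcases t.compat C hCs C' hC's with h | h | h
    · exact Or.inl h
    · exact Or.inr h
    · exact absurd hxC' (Finset.disjoint_left.mp h hxC)
  obtain ⟨A, hAD, hAmin⟩ := Finset.exists_min_image D Finset.card hD
  obtain ⟨hAs, hAR, hxA⟩ := hDfacts A hAD
  have hAsub : ∀ C ∈ D, A ⊆ C := by
    intro C hC
    rcases hchain A hAD C hC with h | h
    · exact h
    · have heq := Finset.eq_of_subset_of_card_le h (hAmin C hC)
      rw [heq]
  obtain ⟨P, hxP, hAP, hPR, hP0, hPcardle, hPmin, hPcompat⟩ :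
      ∃ P : Finset (Fin n), x ∈ P ∧ A ⊂ P ∧ P ⊆ pre n (k+1) ∧
        (∀ a ∈ P, (a : ℕ) ≠ 0) ∧ P.card ≤ n - 1 ∧
        (∀ C ∈ D, C ≠ A → P ⊆ C) ∧
        (∀ C ∈ t.splits, C ⊆ P ∨ P ⊆ C ∨ Disjoint C P) := by
    by_cases hD1 : (D.erase A).Nonempty
    · obtain ⟨P, hPe, hPmin'⟩ := Finset.exists_min_image _ Finset.card hD1
      have hPD : P ∈ D := mem_of_mem_erase hPe
      obtain ⟨hPs, hPR, hxP⟩ := hDfacts P hPD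
      refine ⟨P, hxP, ?_, hPR.subset, t.zero_not_mem P hPs,
        (t.card_le P hPs).trans (by omega), ?_, fun C hC => t.compat C hC P hPs⟩
      · exact lt_of_le_of_ne (hAsub P hPD) (Ne.symm (ne_of_mem_erase hPe))
      · intro C hC hCA
        have hCe : C ∈ D.erase A := mem_erase.mpr ⟨hCA, hC⟩
        rcases hchain P hPD C hC with h | h
        · exact h
        · have heq := Finset.eq_of_subset_of_card_le h (hPmin' C hCe)
          rw [heq]
    · refine ⟨pre n (k+1), x_mem_pre hxlt, hAR, Finset.Subset.refl _, ?_, ?_, ?_, hR⟩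
      · intro a ha; rw [mem_pre] at ha; omega
      · rw [card_pre (by omega : k + 1 ≤ n - 1)]; omega
      · intro C hC hCA
        exact absurd (mem_erase.mpr ⟨hCA, hC⟩) (fun h => hD1 ⟨C, h⟩)
  set B := P.erase x with hBdef
  have hcardA := t.two_le_card A hAs
  have hcardAP : A.card < P.card := Finset.card_lt_card hAP
  have hcardB : B.card = P.card - 1 := Finset.card_erase_of_mem hxP
  have hBs : B ∉ t.splits := by
    intro hBmem
    rcases t.compat A hAs B hBmem with h | h | h
    · exact (mem_erase.mp (h hxA)).1 rfl
    · have hPA : P ⊆ A := by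
        intro a haP
        by_cases hax : a = x
        · rw [hax]; exact hxA
        · exact h (mem_erase.mpr ⟨hax, haP⟩)
      exact absurd (lt_of_lt_of_le hAP hPA) (lt_irrefl A)
    · obtain ⟨a, ha⟩ : (A.erase x).Nonempty := by
        rw [← Finset.card_pos, Finset.card_erase_of_mem hxA]; omega
      have haA := mem_of_mem_erase ha
      have haB : a ∈ B := mem_erase.mpr ⟨ne_of_mem_erase ha, hAP.subset haA⟩
      exact absurd haB (Finset.disjoint_left.mp h haA)
  have hcomp : ∀ C ∈ t.splits, C ≠ A → C ⊆ B ∨ B ⊆ C ∨ Disjoint C B := by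
    intro C hC hCA
    rcases hPcompat C hC with h | h | h
    · by_cases hxC : x ∈ C
      · by_cases hCP : C = P
        · right; left
          rw [hCP]
          exact Finset.erase_subset _ _
        · have hCltP : C ⊂ P := lt_of_le_of_ne h hCP
          have hCD : C ∈ D := mem_filter.mpr ⟨hC, lt_of_lt_of_le hCltP hPR, hxC⟩
          have hPC := hPmin C hCD hCA
          exact absurd (lt_of_lt_of_le hCltP hPC) (lt_irrefl C)
      · left
        exact fun a ha => mem_erase.mpr ⟨fun hax => hxC (by subst hax; exact ha), h ha⟩
    · right; left
      exact (Finset.erase_subset _ _).trans h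
    · right; right
      exact h.mono_right (Finset.erase_subset _ _)
  obtain ⟨t', hadj, hsp⟩ := flip_exchange hn t A B hAs hBs
    (fun a ha => hP0 a (mem_of_mem_erase ha))
    (by omega) (by omega) hcomp
  refine ⟨t', ?_, hadj, ?_⟩
  · intro j hjk hj2
    rw [hsp]
    apply mem_insert_of_mem
    refine mem_erase.mpr ⟨?_, hinv j hjk hj2⟩
    intro heq
    have hlt := Finset.card_lt_card hAR
    rw [card_pre (by omega : k + 1 ≤ n - 1)] at hlt
    have hAj : A.card = j := by rw [← heq, card_pre (by omega : j ≤ n - 1)]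
    omega
  · have hxB : x ∉ B := fun h => (mem_erase.mp h).1 rfl
    have hfilt : t'.splits.filter (fun S => S ⊂ pre n (k+1) ∧ x ∈ S) = D.erase A := by
      ext C
      constructor
      · intro hC
        obtain ⟨hCmem, hCprop⟩ := mem_filter.mp hC
        rw [hsp] at hCmem
        rcases mem_insert.mp hCmem with hCB | hCe
        · exact absurd hCprop.2 (by rw [hCB]; exact hxB)
        · exact mem_erase.mpr ⟨ne_of_mem_erase hCe,
            mem_filter.mpr ⟨mem_of_mem_erase hCe, hCprop⟩⟩
      · intro hC
        obtain ⟨hCA, hCD⟩ := mem_erase.mp hC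
        obtain ⟨hCs, hCprop⟩ := mem_filter.mp hCD
        refine mem_filter.mpr ⟨?_, hCprop⟩
        rw [hsp]
        exact mem_insert_of_mem (mem_erase.mpr ⟨hCA, hCs⟩)
    rw [hfilt, Finset.card_erase_of_mem hAD]
    exact Nat.sub_lt (Finset.card_pos.mpr ⟨A, hAD⟩) one_pos

/-- One stage of the caterpillar construction: from `Inv (k+1)` one can reach
a tree satisfying `Inv k`. -/
lemma step (hn : 4 ≤ n) (k : ℕ) (hk2 : 2 ≤ k) (hk : k ≤ n - 2) (hxlt : k + 1 < n) :
    ∀ d : ℕ, ∀ t : TrivTree n,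
      (t.splits.filter
        (fun A => A ⊂ pre n (k+1) ∧ (⟨k+1, hxlt⟩ : Fin n) ∈ A)).card ≤ d →
      Inv n (k+1) t →
      ∃ t' : TrivTree n, Inv n k t' ∧ (flipGraph n).Reachable t t' := by
  intro d
  induction d with
  | zero =>
    intro t hcard hinv
    by_cases hgoal : pre n k ∈ t.splits
    · refine ⟨t, ?_, SimpleGraph.Reachable.refl t⟩
      intro j hjk hj2
      rcases eq_or_lt_of_le hjk with rfl | hjlt
      · exact hgoal
      · exact hinv j hjlt hj2
    · have hDe : t.splits.filter
          (fun A => A ⊂ pre n (k+1) ∧ (⟨k+1, hxlt⟩ : Fin n) ∈ A) = ∅ :=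
        Finset.card_eq_zero.mp (Nat.le_zero.mp hcard)
      obtain ⟨t', hinv', hadj⟩ := step_direct hn hk2 hk t hxlt hDe hgoal hinv
      exact ⟨t', hinv', hadj.reachable⟩
  | succ d ih =>
    intro t hcard hinv
    by_cases hgoal : pre n k ∈ t.splits
    · refine ⟨t, ?_, SimpleGraph.Reachable.refl t⟩
      intro j hjk hj2
      rcases eq_or_lt_of_le hjk with rfl | hjlt
      · exact hgoal
      · exact hinv j hjlt hj2
    · by_cases hDn : (t.splits.filter
          (fun A => A ⊂ pre n (k+1) ∧ (⟨k+1, hxlt⟩ : Fin n) ∈ A)).Nonempty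
      · obtain ⟨t₁, hinv₁, hadj, hlt⟩ := step_raise hn hk2 hk t hxlt hDn hinv
        obtain ⟨t₂, hinv₂, hr⟩ := ih t₁ (by omega) hinv₁
        exact ⟨t₂, hinv₂, hadj.reachable.trans hr⟩
      · have hDe := Finset.not_nonempty_iff_eq_empty.mp hDn
        obtain ⟨t', hinv', hadj⟩ := step_direct hn hk2 hk t hxlt hDe hgoal hinv
        exact ⟨t', hinv', hadj.reachable⟩

/-- Every tree satisfying `Inv k` can reach a tree satisfying `Inv 2`. -/
lemma toCanon (hn : 4 ≤ n) :
    ∀ k, 2 ≤ k → ∀ t : TrivTree n, Inv n k t →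
      ∃ t', Inv n 2 t' ∧ (flipGraph n).Reachable t t' := by
  intro k
  induction k with
  | zero => exact fun h => absurd h (by omega)
  | succ k ih =>
    intro hk2 t hinv
    by_cases hklt : k < 2
    · have hk2' : k + 1 = 2 := by omega
      rw [hk2'] at hinv
      exact ⟨t, hinv, SimpleGraph.Reachable.refl t⟩
    · have hk2'' : 2 ≤ k := by omega
      by_cases hkn : k ≤ n - 2
      · obtain ⟨t₁, hinv₁, hr₁⟩ := step hn k hk2'' hkn (by omega) _ t le_rfl hinv
        obtain ⟨t₂, hinv₂, hr₂⟩ := ih hk2'' t₁ hinv₁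
        exact ⟨t₂, hinv₂, hr₁.trans hr₂⟩
      · have hinv' : Inv n k t := by
          intro j hjk hj2
          omega
        exact ih hk2'' t hinv'

/-- All trees satisfying `Inv 2` coincide (the caterpillar). -/
lemma canon_eq (hn : 4 ≤ n) (t t' : TrivTree n) (h : Inv n 2 t) (h' : Inv n 2 t') :
    t = t' := by
  have key : ∀ s : TrivTree n, Inv n 2 s →
      s.splits = (Finset.Icc 2 (n-2)).image (pre n) := by
    intro s hs
    have hsub : (Finset.Icc 2 (n-2)).image (pre n) ⊆ s.splits := by
      intro A hA
      obtain ⟨j, hj, rfl⟩ := mem_image.mp hA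
      exact hs j (mem_Icc.mp hj).1 (mem_Icc.mp hj).2
    have hcard : ((Finset.Icc 2 (n-2)).image (pre n)).card = n - 3 := by
      rw [Finset.card_image_of_injOn, Nat.card_Icc]
      · omega
      · intro j hj j' hj' hpre
        rw [mem_coe, mem_Icc] at hj hj'
        have hc : (pre n j).card = (pre n j').card := by rw [hpre]
        rw [card_pre (by omega : j ≤ n - 1), card_pre (by omega : j' ≤ n - 1)] at hc
        exact hc
    exact (Finset.eq_of_subset_of_card_le hsub (by rw [s.card_splits, hcard])).symm
  have hss := (key t h).trans (key t' h').symm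
  cases t
  cases t'
  simpa using hss

end FlipAux


/-- The flip graph `Fₙ` on trivalent trees with `n` labeled leaves is connected
for all `n ≥ 4`: any trivalent tree with `n` labeled leaves can be transformed
into any other by a finite sequence of elementary flips. -/
theorem flipGraph_connected :
    ∀ n : ℕ, 4 ≤ n → ∀ t t' : TrivTree n, (flipGraph n).Reachable t t' := by
  intro n hn t t'
  have hInvTop : ∀ s : TrivTree n, FlipAux.Inv n (n-1) s := by
    intro s j hj hj2
    omega
  obtain ⟨c, hc, hrc⟩ := FlipAux.toCanon hn (n-1) (by omega) t (hInvTop t)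
  obtain ⟨c', hc', hrc'⟩ := FlipAux.toCanon hn (n-1) (by omega) t' (hInvTop t')
  have hcc : c = c' := FlipAux.canon_eq hn c c' hc hc'
  rw [hcc] at hrc
  exact hrc.trans hrc'.symm
end

section
/- Any two trivalent trees with n labeled leaves can be connected by a sequence of at most n·(n−3) elementary flips (a crude explicit bound witnessing connectedness of Fₙ). -/
def Ik (n k : ℕ) : Finset (Fin n) :=
  ((Finset.Icc 1 k).filter (· < n)).attachFin (fun _ hm => (Finset.mem_filter.1 hm).2)

lemma mem_Ik {n k : ℕ} {a : Fin n} : a ∈ Ik n k ↔ 1 ≤ (a:ℕ) ∧ (a:ℕ) ≤ k := by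
  simp [Ik, Finset.mem_attachFin, a.isLt]

lemma card_Ik {n k : ℕ} (h : k ≤ n - 1) (hn : 1 ≤ n) : (Ik n k).card = k := by
  rw [Ik, Finset.card_attachFin]
  rw [Finset.filter_true_of_mem, Nat.card_Icc]
  · omega
  · intro m hm; simp only [Finset.mem_Icc] at hm; omega

lemma Ik_mono {n : ℕ} {k k' : ℕ} (h : k ≤ k') : Ik n k ⊆ Ik n k' := by
  intro a ha; rw [mem_Ik] at *; omega

lemma tree_ext {n : ℕ} {t t' : TrivTree n} (h : t.splits = t'.splits) : t = t' := by
  cases t; cases t'; simp_all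

lemma mem_subset_top {n : ℕ} (t : TrivTree n) {E : Finset (Fin n)} (hE : E ∈ t.splits) :
    E ⊆ Ik n (n - 1) := by
  intro a ha
  have h0 := t.zero_not_mem E hE a ha
  have := a.isLt
  rw [mem_Ik]; omega

/-- The invariant maintained during the descent towards the caterpillar. -/
def TInv {n : ℕ} (x : ℕ) (t : TrivTree n) : Prop :=
  (∀ k, x ≤ k → k ≤ n - 2 → Ik n k ∈ t.splits) ∧
  (∀ E ∈ t.splits, E ⊆ Ik n x ∨ ∃ k, x ≤ k ∧ k ≤ n - 2 ∧ E = Ik n k)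

/-- Splits properly inside `Ik n x` containing the leaf `x`. -/
def SX {n : ℕ} (x : ℕ) (t : TrivTree n) : Finset (Finset (Fin n)) :=
  t.splits.filter (fun E => (∃ a ∈ E, (a:ℕ) = x) ∧ E ⊂ Ik n x)

lemma nested_of_mem {n : ℕ} (t : TrivTree n) {A B : Finset (Fin n)}
    (hA : A ∈ t.splits) (hB : B ∈ t.splits) {a : Fin n} (haA : a ∈ A) (haB : a ∈ B)
    (hcard : A.card ≤ B.card) : A ⊆ B := by
  rcases t.compat A hA B hB with h | h | h
  · exact h
  · exact (Finset.eq_of_subset_of_card_le h hcard) ▸ le_refl _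
  · exact absurd (Finset.disjoint_left.1 h haA) (not_not_intro haB)

lemma step {n : ℕ} (hn : 4 ≤ n) {x : ℕ} (hx3 : 3 ≤ x) (hxn : x ≤ n - 1) (t : TrivTree n)
    (hInv : TInv x t) (hc : (SX x t).Nonempty) :
    ∃ t' : TrivTree n, Flip t t' ∧ TInv x t' ∧ (SX x t').card = (SX x t).card - 1 := by
  classical
  have hxlt : x < n := by omega
  set xF : Fin n := ⟨x, hxlt⟩ with hxF
  have hxFval : (xF : ℕ) = x := rfl
  -- pick D minimal
  obtain ⟨D, hDmem, hDmin⟩ := Finset.exists_min_image (SX x t) Finset.card hc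
  rw [SX, Finset.mem_filter] at hDmem
  obtain ⟨hDsp, ⟨a₀, ha₀D, ha₀val⟩, hDss⟩ := hDmem
  have hxD : xF ∈ D := by
    have : a₀ = xF := Fin.ext (by rw [hxFval]; exact ha₀val)
    exact this ▸ ha₀D
  -- D is minimal among all splits containing x
  have hDle : ∀ E ∈ t.splits, xF ∈ E → D ⊆ E := by
    intro E hE hxE
    rcases hInv.2 E hE with hEsub | ⟨k, hk1, hk2, rfl⟩
    · rcases eq_or_ne E (Ik n x) with rfl | hne
      · exact hDss.subset
      · have hEmem : E ∈ SX x t := by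
          rw [SX, Finset.mem_filter]
          exact ⟨hE, ⟨xF, hxE, hxFval⟩, Finset.ssubset_iff_subset_ne.2 ⟨hEsub, hne⟩⟩
        exact nested_of_mem t hDsp hE hxD hxE (hDmin E hEmem)
    · exact hDss.subset.trans (Ik_mono hk1)
  -- choose Q
  obtain ⟨Q, hDQ, hQsub, hQmin, hq5⟩ :
      ∃ Q : Finset (Fin n), D ⊂ Q ∧ Q ⊆ Ik n x ∧
        (∀ E ∈ t.splits, D ⊂ E → Q ⊆ E) ∧
        (∀ E ∈ t.splits, E ⊆ Q ∨ Q ⊆ E ∨ Disjoint E Q) := by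
    by_cases hS1 : (t.splits.filter (fun E => D ⊂ E)).Nonempty
    · obtain ⟨Q, hQmem, hQmin'⟩ := Finset.exists_min_image _ Finset.card hS1
      rw [Finset.mem_filter] at hQmem
      obtain ⟨hQsp, hDQ⟩ := hQmem
      have hxQ : xF ∈ Q := hDQ.subset hxD
      have hQmin : ∀ E ∈ t.splits, D ⊂ E → Q ⊆ E := by
        intro E hE hDE
        exact nested_of_mem t hQsp hE hxQ (hDE.subset hxD)
          (hQmin' E (Finset.mem_filter.2 ⟨hE, hDE⟩))
      have hQsub : Q ⊆ Ik n x := by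
        by_cases hx2 : x ≤ n - 2
        · have hIx : Ik n x ∈ t.splits := hInv.1 x le_rfl hx2
          exact hQmin _ hIx hDss
        · have hxeq : x = n - 1 := by omega
          rw [hxeq]; exact mem_subset_top t hQsp
      exact ⟨Q, hDQ, hQsub, hQmin, fun E hE => t.compat E hE Q hQsp⟩
    · have hxeq : x = n - 1 := by
        by_contra h
        have hx2 : x ≤ n - 2 := by omega
        have hIx : Ik n x ∈ t.splits := hInv.1 x le_rfl hx2
        exact hS1 ⟨Ik n x, Finset.mem_filter.2 ⟨hIx, hDss⟩⟩
      refine ⟨Ik n x, hDss, le_refl _, ?_, ?_⟩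
      · intro E hE hDE
        exact absurd ⟨E, Finset.mem_filter.2 ⟨hE, hDE⟩⟩ hS1
      · intro E hE
        left; rw [hxeq]; exact mem_subset_top t hE
  have hxQ : xF ∈ Q := hDQ.subset hxD
  set B : Finset (Fin n) := Q.erase xF with hB
  have hxB : xF ∉ B := Finset.notMem_erase _ _
  have hBQ : B ⊆ Q := Finset.erase_subset _ _
  have hcardB : B.card = Q.card - 1 := Finset.card_erase_of_mem hxQ
  have hDQcard : D.card < Q.card := Finset.card_lt_card hDQ
  have hD2 : 2 ≤ D.card := t.two_le_card D hDsp
  have hQle : Q.card ≤ n - 1 := by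
    have h' := Finset.card_le_card hQsub
    rw [card_Ik hxn (by omega)] at h'
    omega
  obtain ⟨w, hwQ, hwD⟩ := Finset.exists_of_ssubset hDQ
  obtain ⟨d, hdD, hdne⟩ := Finset.exists_mem_ne (s := D) (by omega) xF
  have hdB : d ∈ B := Finset.mem_erase.2 ⟨hdne, hDQ.subset hdD⟩
  have hwB : w ∈ B := Finset.mem_erase.2 ⟨fun h => hwD (h ▸ hxD), hwQ⟩
  -- B is not a split of t
  have hBnot : B ∉ t.splits := by
    intro hBsp
    rcases t.compat B hBsp D hDsp with h | h | h
    · exact hwD (h hwB)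
    · exact hxB (h hxD)
    · exact (Finset.disjoint_left.1 h hdB) hdD
  -- compatibility of B with all other splits
  have hBcompat : ∀ E ∈ t.splits, E ≠ D → B ⊆ E ∨ E ⊆ B ∨ Disjoint B E := by
    intro E hE hne
    by_cases hxE : xF ∈ E
    · left
      have hDE : D ⊂ E := Finset.ssubset_iff_subset_ne.2 ⟨hDle E hE hxE, fun h => hne h.symm⟩
      exact hBQ.trans (hQmin E hE hDE)
    · rcases hq5 E hE with h | h | h
      · right; left
        intro e he
        exact Finset.mem_erase.2 ⟨fun hh => hxE (hh ▸ he), h he⟩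
      · exact absurd (h hxQ) hxE
      · right; right; exact (Finset.disjoint_of_subset_left hBQ h.symm)
  -- the new tree
  set F' : Finset (Finset (Fin n)) := insert B (t.splits.erase D) with hF'
  have hmemF' : ∀ E ∈ F', E = B ∨ (E ∈ t.splits ∧ E ≠ D) := by
    intro E hE
    rcases Finset.mem_insert.1 hE with h | h
    · exact Or.inl h
    · exact Or.inr ⟨Finset.mem_of_mem_erase h, (Finset.mem_erase.1 h).1⟩
  have hBzero : ∀ a ∈ B, (a : ℕ) ≠ 0 := by
    intro a ha
    have := mem_Ik.1 (hQsub (hBQ ha))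
    omega
  have hBcard2 : 2 ≤ B.card := by omega
  have hBcardle : B.card ≤ n - 2 := by omega
  have pzero : ∀ E ∈ F', ∀ a ∈ E, (a : ℕ) ≠ 0 := by
    intro E hE a ha
    rcases hmemF' E hE with rfl | ⟨hE', _⟩
    · exact hBzero a ha
    · exact t.zero_not_mem E hE' a ha
  have ptwo : ∀ E ∈ F', 2 ≤ E.card := by
    intro E hE
    rcases hmemF' E hE with rfl | ⟨hE', _⟩
    · exact hBcard2
    · exact t.two_le_card E hE'
  have pcardle : ∀ E ∈ F', E.card ≤ n - 2 := by
    intro E hE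
    rcases hmemF' E hE with rfl | ⟨hE', _⟩
    · exact hBcardle
    · exact t.card_le E hE'
  have pcompat : ∀ A ∈ F', ∀ E ∈ F', A ⊆ E ∨ E ⊆ A ∨ Disjoint A E := by
    intro A hA E hE
    rcases hmemF' A hA with rfl | ⟨hA', hAne⟩
    · rcases hmemF' E hE with rfl | ⟨hE', hEne⟩
      · left; exact Finset.Subset.refl _
      · rcases hBcompat E hE' hEne with h | h | h
        · exact Or.inl h
        · exact Or.inr (Or.inl h)
        · exact Or.inr (Or.inr h)
    · rcases hmemF' E hE with rfl | ⟨hE', _⟩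
      · rcases hBcompat A hA' hAne with h | h | h
        · exact Or.inr (Or.inl h)
        · exact Or.inl h
        · exact Or.inr (Or.inr h.symm)
      · exact t.compat A hA' E hE'
  have pcards : F'.card = n - 3 := by
    have h1 : B ∉ t.splits.erase D := fun h => hBnot (Finset.mem_of_mem_erase h)
    rw [Finset.card_insert_of_notMem h1, Finset.card_erase_of_mem hDsp, t.card_splits]
    omega
  refine ⟨⟨F', pzero, ptwo, pcardle, pcompat, pcards⟩, ⟨?_, ?_⟩, ⟨⟨?_, ?_⟩, ?_⟩⟩
  · -- Flip : ne
    intro h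
    apply hBnot
    rw [h]
    exact Finset.mem_insert_self _ _
  · -- Flip : inter card
    have hinter : t.splits ∩ F' = t.splits.erase D := by
      ext E
      simp only [Finset.mem_inter, hF', Finset.mem_insert, Finset.mem_erase]
      constructor
      · rintro ⟨hE, rfl | ⟨hne, _⟩⟩
        · exact absurd hE hBnot
        · exact ⟨hne, hE⟩
      · rintro ⟨hne, hE⟩
        exact ⟨hE, Or.inr ⟨hne, hE⟩⟩
    show (t.splits ∩ F').card = n - 4
    rw [hinter, Finset.card_erase_of_mem hDsp, t.card_splits]
    omega
  · -- Inv (a)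
    intro k hk1 hk2
    have hIk : Ik n k ∈ t.splits := hInv.1 k hk1 hk2
    have hne : Ik n k ≠ D := by
      intro h
      have hcon : D ⊂ Ik n k := hDss.trans_subset (Ik_mono hk1)
      rw [h] at hcon
      exact hcon.ne rfl
    exact Finset.mem_insert_of_mem (Finset.mem_erase.2 ⟨hne, hIk⟩)
  · -- Inv (b)
    intro E hE
    rcases hmemF' E hE with rfl | ⟨hE', _⟩
    · exact Or.inl (hBQ.trans hQsub)
    · exact hInv.2 E hE'
  · -- SX card
    have hSXeq : Finset.filter
        (fun (E : Finset (Fin n)) => (∃ a ∈ E, (a:ℕ) = x) ∧ E ⊂ Ik n x) F' = (SX x t).erase D := by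
      ext E
      simp only [SX, Finset.mem_filter, Finset.mem_erase, hF', Finset.mem_insert]
      constructor
      · rintro ⟨rfl | ⟨hne, hE⟩, hex, hss⟩
        · obtain ⟨a, ha, hav⟩ := hex
          have : a = xF := Fin.ext (by rw [hav, hxFval])
          exact absurd (this ▸ ha) hxB
        · exact ⟨hne, Finset.mem_of_mem_erase (Finset.mem_erase.2 ⟨hne, hE⟩), hex, hss⟩
      · rintro ⟨hne, hE, hex, hss⟩
        exact ⟨Or.inr ⟨hne, hE⟩, hex, hss⟩
    show (Finset.filter (fun (E : Finset (Fin n)) => (∃ a ∈ E, (a:ℕ) = x) ∧ E ⊂ Ik n x) F').card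
      = (SX x t).card - 1
    rw [hSXeq, Finset.card_erase_of_mem]
    rw [SX, Finset.mem_filter]
    exact ⟨hDsp, ⟨a₀, ha₀D, ha₀val⟩, hDss⟩

lemma ssub' {α : Type*} [DecidableEq α] {A B : Finset α} (h : A ⊆ B) (hne : A ≠ B) : A ⊂ B :=
  Finset.ssubset_iff_subset_ne.2 ⟨h, hne⟩

lemma laminar_bound {α : Type*} [DecidableEq α] :
    ∀ (m : ℕ) (S : Finset α) (G : Finset (Finset α)),
    S.card ≤ m →
    (∀ A ∈ G, A ⊆ S) → (∀ A ∈ G, 2 ≤ A.card) →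
    (∀ A ∈ G, ∀ B ∈ G, A ⊆ B ∨ B ⊆ A ∨ Disjoint A B) →
    S ∉ G → G.card ≤ S.card - 2 := by
  intro m
  induction m with
  | zero =>
    intro S G hS hsub h2 _ _
    have : G = ∅ := by
      by_contra h
      obtain ⟨A, hA⟩ := Finset.nonempty_iff_ne_empty.2 h
      have := Finset.card_le_card (hsub A hA)
      have := h2 A hA
      omega
    simp [this]
  | succ m ih =>
    intro S G hS hsub h2 hcompat hSG
    classical
    set Ms : Finset (Finset α) := G.filter (fun M => ∀ A ∈ G, ¬ M ⊂ A) with hMs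
    have hcover : ∀ A ∈ G, ∃ M ∈ Ms, A ⊆ M := by
      intro A hA
      obtain ⟨M, hM, hmax⟩ := Finset.exists_max_image (G.filter (fun B => A ⊆ B))
        Finset.card (⟨A, by simp [hA]⟩)
      rw [Finset.mem_filter] at hM
      refine ⟨M, ?_, hM.2⟩
      rw [hMs, Finset.mem_filter]
      refine ⟨hM.1, fun B hB hMB => ?_⟩
      have hAB : A ⊆ B := hM.2.trans hMB.subset
      have := hmax B (by simp [hB, hAB])
      exact hMB.ne (Finset.eq_of_subset_of_card_le hMB.subset this)
    have hdisj : ∀ M ∈ Ms, ∀ M' ∈ Ms, M ≠ M' → Disjoint M M' := by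
      intro M hM M' hM' hne
      rw [hMs, Finset.mem_filter] at hM hM'
      rcases hcompat M hM.1 M' hM'.1 with h | h | h
      · exact absurd (ssub' h hne) (hM.2 M' hM'.1)
      · exact absurd (ssub' h hne.symm) (hM'.2 M hM.1)
      · exact h
    have hbelow : ∀ M ∈ Ms, (G.filter (fun A => A ⊆ M)).card ≤ M.card - 1 := by
      intro M hM
      rw [hMs, Finset.mem_filter] at hM
      have hMS : M ⊂ S := ssub' (hsub M hM.1) (fun h => hSG (h ▸ hM.1))
      have hMm : M.card ≤ m := by
        have := Finset.card_lt_card hMS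
        omega
      have hstep : (G.filter (fun A => A ⊂ M)).card ≤ M.card - 2 := by
        refine ih M _ hMm ?_ ?_ ?_ ?_
        · intro A hA; exact (Finset.mem_filter.1 hA).2.subset
        · intro A hA; exact h2 A (Finset.mem_filter.1 hA).1
        · intro A hA B hB
          exact hcompat A (Finset.mem_filter.1 hA).1 B (Finset.mem_filter.1 hB).1
        · intro h; exact (Finset.mem_filter.1 h).2.ne rfl
      have hsplit : G.filter (fun A => A ⊆ M) ⊆ insert M (G.filter (fun A => A ⊂ M)) := by
        intro A hA
        rw [Finset.mem_filter] at hA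
        rcases eq_or_ne A M with rfl | hne
        · exact Finset.mem_insert_self _ _
        · exact Finset.mem_insert_of_mem (Finset.mem_filter.2 ⟨hA.1, ssub' hA.2 hne⟩)
      have h2M := h2 M hM.1
      have := Finset.card_le_card hsplit
      have := Finset.card_insert_le M (G.filter (fun A => A ⊂ M))
      omega
    have hGsub : G ⊆ Ms.biUnion (fun M => G.filter (fun A => A ⊆ M)) := by
      intro A hA
      obtain ⟨M, hM, hAM⟩ := hcover A hA
      exact Finset.mem_biUnion.2 ⟨M, hM, Finset.mem_filter.2 ⟨hA, hAM⟩⟩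
    have hcard : G.card ≤ ∑ M ∈ Ms, (G.filter (fun A => A ⊆ M)).card :=
      (Finset.card_le_card hGsub).trans Finset.card_biUnion_le
    have hsum1 : ∑ M ∈ Ms, (G.filter (fun A => A ⊆ M)).card ≤ ∑ M ∈ Ms, (M.card - 1) :=
      Finset.sum_le_sum hbelow
    have hsum2 : ∑ M ∈ Ms, (M.card - 1) + Ms.card = ∑ M ∈ Ms, M.card := by
      rw [Finset.card_eq_sum_ones Ms, ← Finset.sum_add_distrib]
      refine Finset.sum_congr rfl (fun M hM => ?_)
      have := h2 M (Finset.mem_filter.1 hM).1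
      omega
    have hunion : (∑ M ∈ Ms, M.card) ≤ S.card := by
      rw [← Finset.card_biUnion hdisj]
      apply Finset.card_le_card
      intro a ha
      obtain ⟨M, hM, haM⟩ := Finset.mem_biUnion.1 ha
      exact hsub M (Finset.mem_filter.1 hM).1 haM
    rcases Nat.lt_or_ge Ms.card 2 with hMs2 | hMs2
    · interval_cases h : Ms.card
      · have : G = ∅ := by
          rw [Finset.card_eq_zero] at h
          by_contra hne
          obtain ⟨A, hA⟩ := Finset.nonempty_iff_ne_empty.2 hne
          obtain ⟨M, hM, _⟩ := hcover A hA
          simp [h] at hM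
        simp [this]
      · obtain ⟨M, hMeq⟩ := Finset.card_eq_one.1 h
        have hM : M ∈ Ms := by simp [hMeq]
        have hGone : G ⊆ G.filter (fun A => A ⊆ M) := by
          intro A hA
          obtain ⟨M', hM', hAM⟩ := hcover A hA
          rw [hMeq, Finset.mem_singleton] at hM'
          exact Finset.mem_filter.2 ⟨hA, hM' ▸ hAM⟩
        have hMS : M ⊂ S := ssub' (hsub M (Finset.mem_filter.1 hM).1)
          (fun hh => hSG (hh ▸ (Finset.mem_filter.1 hM).1))
        have := Finset.card_lt_card hMS
        have := hbelow M hM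
        have := Finset.card_le_card hGone
        omega
    · omega

lemma SX_card_le {n : ℕ} (hn : 4 ≤ n) {x : ℕ} (hx3 : 3 ≤ x) (hxn : x ≤ n - 1)
    (t : TrivTree n) : (SX x t).card ≤ x - 2 := by
  classical
  have hxlt : x < n := by omega
  have hinj : Set.InjOn Finset.card (SX x t : Set (Finset (Fin n))) := by
    intro A hA B hB hcard
    simp only [Finset.coe_filter, SX, Set.mem_setOf_eq] at hA hB
    obtain ⟨hAsp, ⟨a, haA, hav⟩, _⟩ := hA
    obtain ⟨hBsp, ⟨b, hbB, hbv⟩, _⟩ := hB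
    have hab : a = b := Fin.ext (by rw [hav, hbv])
    have haB : a ∈ B := by rw [hab]; exact hbB
    exact Finset.eq_of_subset_of_card_le
      (nested_of_mem t hAsp hBsp haA haB (le_of_eq hcard)) (le_of_eq hcard.symm)
  have h1 : (SX x t).card = ((SX x t).image Finset.card).card :=
    (Finset.card_image_of_injOn hinj).symm
  have h2 : (SX x t).image Finset.card ⊆ Finset.Icc 2 (x - 1) := by
    intro c hc
    obtain ⟨A, hA, rfl⟩ := Finset.mem_image.1 hc
    rw [SX, Finset.mem_filter] at hA
    have hA2 := t.two_le_card A hA.1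
    have hAlt : A.card < x := by
      have := Finset.card_lt_card hA.2.2
      rwa [card_Ik hxn (by omega)] at this
    rw [Finset.mem_Icc]; omega
  have := Finset.card_le_card h2
  rw [Nat.card_Icc] at this
  omega

lemma upgrade {n : ℕ} (hn : 4 ≤ n) {x : ℕ} (hx3 : 3 ≤ x) (hxn : x ≤ n - 1)
    (t : TrivTree n) (hInv : TInv x t) (h0 : SX x t = ∅) : TInv (x - 1) t := by
  classical
  have hxlt : x < n := by omega
  set xF : Fin n := ⟨x, hxlt⟩ with hxF
  have hxFval : (xF : ℕ) = x := rfl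
  -- every split not containing x as an element is inside Ik (x-1), etc.
  have hkey : ∀ E ∈ t.splits, (E ⊆ Ik n (x - 1)) ∨ ∃ k, x ≤ k ∧ k ≤ n - 2 ∧ E = Ik n k := by
    intro E hE
    rcases hInv.2 E hE with hEsub | ⟨k, hk1, hk2, rfl⟩
    · by_cases hxE : xF ∈ E
      · -- E = Ik n x
        have hEeq : E = Ik n x := by
          by_contra hne
          have : E ∈ SX x t := by
            rw [SX, Finset.mem_filter]
            exact ⟨hE, ⟨xF, hxE, hxFval⟩, Finset.ssubset_iff_subset_ne.2 ⟨hEsub, hne⟩⟩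
          rw [h0] at this
          exact absurd this (Finset.notMem_empty _)
        have hxle : x ≤ n - 2 := by
          by_contra h
          have hcard := t.card_le E hE
          rw [hEeq, card_Ik hxn (by omega)] at hcard
          omega
        exact Or.inr ⟨x, le_refl _, hxle, hEeq⟩
      · left
        intro a ha
        have h1 := mem_Ik.1 (hEsub ha)
        have h2 : (a : ℕ) ≠ x := by
          intro h
          have haxF : a = xF := by apply Fin.ext; rw [h]
          rw [haxF] at ha
          exact hxE ha
        rw [mem_Ik]
        omega
    · exact Or.inr ⟨k, hk1, hk2, rfl⟩
  constructor
  · intro k hk1 hk2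
    rcases eq_or_lt_of_le hk1 with rfl | hlt
    · -- the hard case : Ik n (x-1) ∈ splits by counting
      set G : Finset (Finset (Fin n)) := t.splits.filter (fun E => E ⊆ Ik n (x - 1)) with hG
      have hcompl : t.splits \ G ⊆ (Finset.Icc x (n - 2)).image (Ik n) := by
        intro E hE
        rw [Finset.mem_sdiff, hG, Finset.mem_filter] at hE
        obtain ⟨hEsp, hEn⟩ := hE
        rcases hkey E hEsp with h | ⟨k', hk1', hk2', rfl⟩
        · exact absurd (And.intro hEsp h) hEn
        · exact Finset.mem_image.2 ⟨k', Finset.mem_Icc.2 ⟨hk1', hk2'⟩, rfl⟩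
      have hcompl_card : (t.splits \ G).card ≤ n - 1 - x := by
        have h1 := Finset.card_le_card hcompl
        have h2 := Finset.card_image_le (s := Finset.Icc x (n - 2)) (f := Ik n)
        rw [Nat.card_Icc] at h2
        omega
      have hGsub : G ⊆ t.splits := Finset.filter_subset _ _
      have hGcard : x - 2 ≤ G.card := by
        have := Finset.card_sdiff_add_card_eq_card hGsub
        have := t.card_splits
        omega
      by_contra hnot
      have hbound : G.card ≤ (Ik n (x - 1)).card - 2 := by
        refine laminar_bound (Ik n (x - 1)).card _ _ (le_refl _) ?_ ?_ ?_ ?_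
        · intro A hA; exact (Finset.mem_filter.1 hA).2
        · intro A hA; exact t.two_le_card A (Finset.mem_filter.1 hA).1
        · intro A hA B hB
          exact t.compat A (Finset.mem_filter.1 hA).1 B (Finset.mem_filter.1 hB).1
        · intro h
          exact hnot ((Finset.mem_filter.1 h).1)
      rw [card_Ik (by omega) (by omega)] at hbound
      omega
    · exact hInv.1 k (by omega) hk2
  · intro E hE
    rcases hkey E hE with h | ⟨k, hk1, hk2, rfl⟩
    · exact Or.inl h
    · exact Or.inr ⟨k, by omega, hk2, rfl⟩

lemma phase {n : ℕ} (hn : 4 ≤ n) {x : ℕ} (hx3 : 3 ≤ x) (hxn : x ≤ n - 1) :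
    ∀ (d : ℕ) (t : TrivTree n), TInv x t → (SX x t).card ≤ d →
    ∃ t' : TrivTree n, TInv x t' ∧ SX x t' = ∅ ∧
      ∃ p : (flipGraph n).Walk t t', p.length ≤ d := by
  intro d
  induction d with
  | zero =>
    intro t hInv hle
    exact ⟨t, hInv, Finset.card_eq_zero.1 (Nat.le_zero.1 hle), SimpleGraph.Walk.nil, by simp⟩
  | succ d ih =>
    intro t hInv hle
    by_cases h0 : SX x t = ∅
    · exact ⟨t, hInv, h0, SimpleGraph.Walk.nil, by simp⟩
    · obtain ⟨t₁, hflip, hInv₁, hcard₁⟩ := step hn hx3 hxn t hInv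
        (Finset.nonempty_iff_ne_empty.2 h0)
      have hle₁ : (SX x t₁).card ≤ d := by
        have : 1 ≤ (SX x t).card := Finset.card_pos.2 (Finset.nonempty_iff_ne_empty.2 h0)
        omega
      obtain ⟨t', hInv', hSX', p, hp⟩ := ih t₁ hInv₁ hle₁
      exact ⟨t', hInv', hSX', SimpleGraph.Walk.cons hflip p, by
        have := SimpleGraph.Walk.length_cons hflip p; omega⟩

def cat (n : ℕ) (hn : 4 ≤ n) : TrivTree n where
  splits := (Finset.Icc 2 (n - 2)).image (Ik n)
  zero_not_mem := by
    intro A hA a ha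
    obtain ⟨k, _, rfl⟩ := Finset.mem_image.1 hA
    have := mem_Ik.1 ha
    omega
  two_le_card := by
    intro A hA
    obtain ⟨k, hk, rfl⟩ := Finset.mem_image.1 hA
    rw [Finset.mem_Icc] at hk
    rw [card_Ik (by omega) (by omega)]
    exact hk.1
  card_le := by
    intro A hA
    obtain ⟨k, hk, rfl⟩ := Finset.mem_image.1 hA
    rw [Finset.mem_Icc] at hk
    rw [card_Ik (by omega) (by omega)]
    exact hk.2
  compat := by
    intro A hA B hB
    obtain ⟨k, hk, rfl⟩ := Finset.mem_image.1 hA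
    obtain ⟨k', hk', rfl⟩ := Finset.mem_image.1 hB
    rcases le_total k k' with h | h
    · exact Or.inl (Ik_mono h)
    · exact Or.inr (Or.inl (Ik_mono h))
  card_splits := by
    rw [Finset.card_image_of_injOn, Nat.card_Icc]
    · omega
    · intro k hk k' hk' heq
      rw [Finset.mem_coe, Finset.mem_Icc] at hk hk'
      have h1 : (Ik n k).card = k := card_Ik (by omega) (by omega)
      have h2 : (Ik n k').card = k' := card_Ik (by omega) (by omega)
      rw [heq] at h1
      omega

lemma inv_top {n : ℕ} (hn : 4 ≤ n) (t : TrivTree n) : TInv (n - 1) t := by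
  constructor
  · intro k hk1 hk2; omega
  · intro E hE; exact Or.inl (mem_subset_top t hE)

lemma inv2_eq_cat {n : ℕ} (hn : 4 ≤ n) (t : TrivTree n) (hInv : TInv 2 t) :
    t = cat n hn := by
  apply tree_ext
  have hsub : t.splits ⊆ (cat n hn).splits := by
    intro E hE
    rcases hInv.2 E hE with h | ⟨k, hk1, hk2, rfl⟩
    · have hcard2 : (Ik n 2).card = 2 := card_Ik (by omega) (by omega)
      have hEeq : E = Ik n 2 :=
        Finset.eq_of_subset_of_card_le h (by rw [hcard2]; exact t.two_le_card E hE)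
      show E ∈ (Finset.Icc 2 (n - 2)).image (Ik n)
      exact Finset.mem_image.2 ⟨2, Finset.mem_Icc.2 ⟨le_refl _, by omega⟩, hEeq.symm⟩
    · exact Finset.mem_image.2 ⟨k, Finset.mem_Icc.2 ⟨hk1, hk2⟩, rfl⟩
  exact Finset.eq_of_subset_of_card_le hsub
    (by rw [t.card_splits, (cat n hn).card_splits])

lemma descent {n : ℕ} (hn : 4 ≤ n) :
    ∀ (j : ℕ) (t : TrivTree n), 2 + j ≤ n - 1 → TInv (2 + j) t →
    ∃ p : (flipGraph n).Walk t (cat n hn), 2 * p.length ≤ j * (j + 1) := by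
  intro j
  induction j with
  | zero =>
    intro t _ hInv
    have := inv2_eq_cat hn t hInv
    subst this
    exact ⟨SimpleGraph.Walk.nil, by simp⟩
  | succ j ih =>
    intro t hxn hInv
    set x : ℕ := 2 + (j + 1) with hx
    have hx3 : 3 ≤ x := by omega
    have hxn' : x ≤ n - 1 := hxn
    obtain ⟨t₁, hInv₁, hSX₁, p₁, hp₁⟩ := phase hn hx3 hxn' (x - 2) t hInv
      (SX_card_le hn hx3 hxn' t)
    have hupg : TInv (x - 1) t₁ := upgrade hn hx3 hxn' t₁ hInv₁ hSX₁
    have hxm : x - 1 = 2 + j := by omega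
    rw [hxm] at hupg
    obtain ⟨p₂, hp₂⟩ := ih t₁ (by omega) hupg
    refine ⟨p₁.append p₂, ?_⟩
    rw [SimpleGraph.Walk.length_append]
    have hx2 : x - 2 = j + 1 := by omega
    rw [hx2] at hp₁
    calc 2 * (p₁.length + p₂.length) = 2 * p₁.length + 2 * p₂.length := by ring
      _ ≤ 2 * (j + 1) + j * (j + 1) := by omega
      _ = (j + 1) * (j + 1 + 1) := by ring

/-- Any two trivalent trees with `n` labeled leaves are connected by a
sequence of at most `n·(n-3)` elementary flips. -/
theorem flip_distance_bound :
    ∀ n : ℕ, 4 ≤ n → ∀ t t' : TrivTree n,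
      ∃ p : (flipGraph n).Walk t t', p.length ≤ n * (n - 3) := by
  intro n hn t t'
  have hj : 2 + (n - 3) ≤ n - 1 := by omega
  have hInv : TInv (2 + (n - 3)) t := by
    have h := inv_top hn t
    have : 2 + (n - 3) = n - 1 := by omega
    rw [this]
    exact h
  have hInv' : TInv (2 + (n - 3)) t' := by
    have h := inv_top hn t'
    have : 2 + (n - 3) = n - 1 := by omega
    rw [this]
    exact h
  obtain ⟨p₁, hp₁⟩ := descent hn (n - 3) t hj hInv
  obtain ⟨p₂, hp₂⟩ := descent hn (n - 3) t' hj hInv'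
  refine ⟨p₁.append p₂.reverse, ?_⟩
  rw [SimpleGraph.Walk.length_append, SimpleGraph.Walk.length_reverse]
  have hmul : (n - 3) * (n - 3 + 1) ≤ n * (n - 3) := by
    calc (n - 3) * (n - 3 + 1) ≤ (n - 3) * n := by
          apply Nat.mul_le_mul_left
          omega
      _ = n * (n - 3) := Nat.mul_comm _ _
  omega
end
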